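/- Let D ≥ 1, let ω = e^{2πi/D}, and for g ∈ Z/DZ define the diagonal unitary U_g = diag(ω^{jg})_{j=0}^{D−1}. Let c : Z/DZ → C and define Γ[X] = (1/D) Σ_g c_g U_g Tr(U_g† X). If the Choi matrix C[Γ] = Σ_{α,β} E_{αβ} ⊗ Γ[E_{αβ}] is positive semidefinite, then for every α ∈ Z/DZ the discrete Fourier sum Σ_g c_g ω^{gα} is a nonnegative real number. -/

import Mathlib

open Matrix
open scoped Kronecker ComplexOrder

/-- Choi positivity constrains the spectrum of a channel with clock-unitary
    eigenvectors: if Γ[X] = (1/D) Σ_g c_g U_g Tr(U_gᴴ X) with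
    U_g = diag(ω^{jg}), ω = e^{2πi/D}, and the Choi matrix
    Σ_{α,β} E_{αβ} ⊗ Γ[E_{αβ}] is positive semidefinite, then every
    discrete Fourier sum Σ_g c_g ω^{gα} is real and nonnegative. -/
theorem choi_positivity_fourier_constraint (D : ℕ) [NeZero D] (hD : 1 ≤ D)
    (c : ZMod D → ℂ)
    (ω : ℂ) (hω : ω = Complex.exp (2 * Real.pi * Complex.I / D))
    (U : ZMod D → Matrix (Fin D) (Fin D) ℂ)
    (hU : ∀ g, U g = Matrix.diagonal fun j : Fin D => ω ^ ((j : ℕ) * (g.val)))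
    (Γ : Matrix (Fin D) (Fin D) ℂ →ₗ[ℂ] Matrix (Fin D) (Fin D) ℂ)
    (hΓ : ∀ X, Γ X = (D : ℂ)⁻¹ • ∑ g, (c g * ((U g)ᴴ * X).trace) • U g)
    (hChoi : (∑ α : Fin D, ∑ β : Fin D,
        (Matrix.single α β (1 : ℂ)) ⊗ₖ Γ (Matrix.single α β 1)).PosSemidef) :
    ∀ α : ZMod D,
      (∑ g, c g * ω ^ (g.val * α.val)).im = 0 ∧
        0 ≤ (∑ g, c g * ω ^ (g.val * α.val)).re := by
  intro α
  have hDpos : 0 < D := hD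
  set M := (∑ α : Fin D, ∑ β : Fin D,
        (Matrix.single α β (1 : ℂ)) ⊗ₖ Γ (Matrix.single α β 1)) with hM
  set p : Fin D × Fin D := (⟨0, hDpos⟩, ⟨α.val, α.val_lt⟩) with hp
  have hdiag : 0 ≤ M p p := by
    have := hChoi.diag_nonneg (i := p)
    simpa [dotProduct, mulVec, Pi.single_apply, Finset.sum_ite_eq, apply_ite] using this
  -- trace (U g)ᴴ * E00 = 1
  have htr : ∀ g : ZMod D, ((U g)ᴴ * Matrix.single (⟨0, hDpos⟩ : Fin D) ⟨0, hDpos⟩ (1:ℂ)).trace = 1 := by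
    intro g
    simp [hU g, Matrix.trace, Matrix.diag, Matrix.mul_apply, Matrix.single,
      Matrix.diagonal_apply, ite_and, Finset.sum_ite_eq, Finset.sum_ite_eq', apply_ite]
  -- Γ(E00) at (i,i)
  have hΓE : ∀ i : Fin D, (Γ (Matrix.single (⟨0, hDpos⟩ : Fin D) ⟨0, hDpos⟩ (1:ℂ))) i i
      = (D : ℂ)⁻¹ * ∑ g, c g * ω ^ ((i : ℕ) * g.val) := by
    intro i
    rw [hΓ]
    simp only [Matrix.smul_apply, Matrix.sum_apply, htr, mul_one, Matrix.smul_apply, smul_eq_mul,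
      Finset.mul_sum]
    congr 1
    ext g
    rw [hU g]
    simp [Matrix.diagonal_apply]
  have hMpp : M p p = (D : ℂ)⁻¹ * ∑ g, c g * ω ^ (g.val * α.val) := by
    rw [hM]
    simp only [Matrix.sum_apply, Matrix.kroneckerMap_apply]
    rw [Finset.sum_eq_single (⟨0, hDpos⟩ : Fin D)]
    · rw [Finset.sum_eq_single (⟨0, hDpos⟩ : Fin D)]
      · simp only [hp, Matrix.single_apply_same, one_mul]
        rw [hΓE]
        congr 1
        apply Finset.sum_congr rfl
        intro g _
        rw [mul_comm (α.val) (g.val)]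
      · intro b _ hb
        rw [Matrix.single_apply_of_ne _ _ _ _ _ (by tauto), zero_mul]
      · intro h; exact absurd (Finset.mem_univ _) h
    · intro a _ ha
      apply Finset.sum_eq_zero
      intro b _
      rw [Matrix.single_apply_of_ne _ _ _ _ _ (by tauto), zero_mul]
    · intro h; exact absurd (Finset.mem_univ _) h
  rw [hMpp] at hdiag
  rw [Complex.le_def] at hdiag
  obtain ⟨hre, him⟩ := hdiag
  set z := ∑ g, c g * ω ^ (g.val * α.val) with hz
  have h1 : ((D : ℂ)⁻¹ * z).re = (D : ℝ)⁻¹ * z.re := by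
    simp [Complex.mul_re]
  have h2 : ((D : ℂ)⁻¹ * z).im = (D : ℝ)⁻¹ * z.im := by
    simp [Complex.mul_im]
  have hD' : (0:ℝ) < (D : ℝ)⁻¹ := by positivity
  constructor
  · have := him.symm
    rw [h2] at this
    simp at this
    rcases this with h | h
    · exact absurd h (by positivity)
    · exact h
  · rw [h1] at hre
    simp at hre
    nlinarith [hre]
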